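/- arXiv:2212.14522 — 3 statements merged into one kernel-verified Lean document; each statement's English description precedes it below -/
import Mathlib

section
/- The cyclic statistics pk and cpk are equivalent: for all permutations π and σ of the same length, the multiset {{pk π̄ : π̄ ∈ [π]}} equals the multiset {{pk σ̄ : σ̄ ∈ [σ]}} if and only if cpk π = cpk σ. -/
/-- A permutation: a list of distinct positive integers. -/
def IsPerm (π : List ℕ) : Prop := π.Nodup ∧ ∀ x ∈ π, 0 < x

/-- The descent set `Des π = {i ∈ {1,…,n−1} : π_i > π_{i+1}}` (1-based indexing). -/
def Des (π : List ℕ) : Finset ℕ :=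
  (Finset.Icc 1 (π.length - 1)).filter fun i => π.getD i 0 < π.getD (i - 1) 0

/-- The descent number. -/
def des (π : List ℕ) : ℕ := (Des π).card

/-- The major index. -/
def maj (π : List ℕ) : ℕ := ∑ i ∈ Des π, i

/-- The cyclic descent set `cDes π = {i ∈ {1,…,n} : π_i > π_{i+1}}`, indices mod `n`. -/
def cDes (π : List ℕ) : Finset ℕ :=
  (Finset.Icc 1 π.length).filter fun i => π.getD (i % π.length) 0 < π.getD (i - 1) 0

/-- The cyclic descent number. -/
def cdes (π : List ℕ) : ℕ := (cDes π).card

/-- The cyclic major index. -/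
def cmaj (π : List ℕ) : ℕ := ∑ i ∈ cDes π, i

/-- The peak set `Pk π = {i ∈ {2,…,n−1} : π_{i−1} < π_i > π_{i+1}}` (1-based indexing). -/
def Pk (π : List ℕ) : Finset ℕ :=
  (Finset.Icc 2 (π.length - 1)).filter fun i =>
    π.getD (i - 2) 0 < π.getD (i - 1) 0 ∧ π.getD i 0 < π.getD (i - 1) 0

/-- The peak number. -/
def pk (π : List ℕ) : ℕ := (Pk π).card

/-- The cyclic peak set `cPk π = {i ∈ {1,…,n} : π_{i−1} < π_i > π_{i+1}}`, indices mod `n`. -/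
def cPk (π : List ℕ) : Finset ℕ :=
  (Finset.Icc 1 π.length).filter fun i =>
    π.getD ((i + π.length - 2) % π.length) 0 < π.getD (i - 1) 0 ∧
      π.getD (i % π.length) 0 < π.getD (i - 1) 0

/-- The cyclic peak number. -/
def cpk (π : List ℕ) : ℕ := (cPk π).card

/-- The cyclic valley set `cVal π = {i ∈ {1,…,n} : π_{i−1} > π_i < π_{i+1}}`, indices mod `n`. -/
def cVal (π : List ℕ) : Finset ℕ :=
  (Finset.Icc 1 π.length).filter fun i =>
    π.getD (i - 1) 0 < π.getD ((i + π.length - 2) % π.length) 0 ∧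
      π.getD (i - 1) 0 < π.getD (i % π.length) 0

/-- The cyclic valley number. -/
def cval (π : List ℕ) : ℕ := (cVal π).card

/-- The distribution of a linear statistic `st` over the `n` rotations of `π`,
i.e. the multiset-valued cyclic statistic induced by `st`, evaluated at `[π]`. -/
def cycStat {A : Type*} (st : List ℕ → A) (π : List ℕ) : Multiset A :=
  (Multiset.range π.length).map fun i => st (π.rotate i)

/-- `τ` is a (linear) shuffle of `π` and `σ`. -/
def IsShuffle (π σ τ : List ℕ) : Prop :=
  π.Sublist τ ∧ σ.Sublist τ ∧ τ.length = π.length + σ.length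

/-- `[τ]` is a cyclic shuffle of `[π]` and `[σ]`: some rotation of `τ` is a shuffle
of some rotation of `π` and some rotation of `σ`. -/
def IsCyclicShuffle (π σ τ : List ℕ) : Prop :=
  ∃ i j k, IsShuffle (π.rotate i) (σ.rotate j) (τ.rotate k)

/-- The set of cyclic shuffles of `[π]` and `[σ]` (as elements of `Cycle ℕ`, so that each
cyclic shuffle is counted once) on which the statistic `cst` takes the value `v`. -/
def cycShuffleFiber {A : Type*} (cst : List ℕ → A) (π σ : List ℕ) (v : A) : Set (Cycle ℕ) :=
  {c : Cycle ℕ | ∃ τ : List ℕ, (↑τ : Cycle ℕ) = c ∧ IsCyclicShuffle π σ τ ∧ cst τ = v}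

/-- A (rotation-invariant) statistic `cst` is cyclic shuffle-compatible if the distribution
of `cst` over the set of cyclic shuffles of `[π]` and `[σ]` (each cyclic shuffle counted
once) depends only on `cst π`, `cst σ`, `|π|` and `|σ|`. -/
def CyclicShuffleCompatible {A : Type*} (cst : List ℕ → A) : Prop :=
  ∀ π σ π' σ' : List ℕ, IsPerm π → IsPerm σ → IsPerm π' → IsPerm σ' →
    π.Disjoint σ → π'.Disjoint σ' →
    π.length = π'.length → σ.length = σ'.length →
    cst π = cst π' → cst σ = cst σ' →
    ∀ v : A, (cycShuffleFiber cst π σ v).ncard = (cycShuffleFiber cst π' σ' v).ncard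

namespace PkCpkAux

/-- cyclic peak predicate at 0-based position `j`. -/
def Q (π : List ℕ) (j : ℕ) : Prop :=
  π.getD ((j + π.length - 1) % π.length) 0 < π.getD j 0 ∧
    π.getD ((j + 1) % π.length) 0 < π.getD j 0

instance (π : List ℕ) : DecidablePred (Q π) := fun j => by
  unfold Q; infer_instance

/-- the set of 0-based cyclic peak positions. -/
def S (π : List ℕ) : Finset ℕ := (Finset.range π.length).filter (Q π)

/-- inverse of the shift-by-`s` map modulo `n`. -/
def g (n s b : ℕ) : ℕ := (b + (n - s % n)) % n

lemma g_lt {n : ℕ} (hn : 0 < n) (s b : ℕ) : g n s b < n := Nat.mod_lt _ hn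

lemma mod_sub_cancel {n : ℕ} (hn : 0 < n) (s x : ℕ) :
    (x + s + (n - s % n)) % n = (x + n) % n := by
  have hs : s % n < n := Nat.mod_lt _ hn
  have e1 : x + s + (n - s % n) = (x + (n - s % n)) + s := by omega
  rw [e1]
  have e2 : ((x + (n - s % n)) + s) % n = ((x + (n - s % n)) + s % n) % n :=
    Nat.ModEq.add_left _ (Nat.mod_modEq s n).symm
  rw [e2]
  congr 1
  omega

lemma g_mod {n : ℕ} (hn : 0 < n) {a : ℕ} (s : ℕ) (ha : a < n) :
    g n s ((a + s) % n) = a := by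
  unfold g
  rw [Nat.mod_add_mod, mod_sub_cancel hn, Nat.add_mod_right, Nat.mod_eq_of_lt ha]

lemma mod_g {n : ℕ} (hn : 0 < n) {b : ℕ} (s : ℕ) (hb : b < n) :
    (g n s b + s) % n = b := by
  unfold g
  rw [Nat.mod_add_mod]
  have e : b + (n - s % n) + s = b + s + (n - s % n) := by omega
  rw [e, mod_sub_cancel hn, Nat.add_mod_right, Nat.mod_eq_of_lt hb]

lemma add_mod_inj {n : ℕ} (hn : 0 < n) {a b : ℕ} (s : ℕ) (ha : a < n) (hb : b < n)
    (h : (a + s) % n = (b + s) % n) : a = b := by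
  have h2 := congrArg (g n s) h
  rwa [g_mod hn s ha, g_mod hn s hb] at h2

lemma getD_rotate (π : List ℕ) (r k : ℕ) (hk : k < π.length) :
    (π.rotate r).getD k 0 = π.getD ((k + r) % π.length) 0 := by
  have hn : 0 < π.length := lt_of_le_of_lt (Nat.zero_le _) hk
  have h1 : k < (π.rotate r).length := by simpa using hk
  rw [List.getD_eq_getElem _ _ h1, List.getD_eq_getElem _ _ (Nat.mod_lt _ hn),
    List.getElem_rotate]

lemma cpk_eq (π : List ℕ) : cpk π = (S π).card := by
  rw [cpk]
  apply Finset.card_nbij' (i := fun i => i - 1) (j := fun j => j + 1)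
  · intro a ha
    simp only [cPk, Finset.mem_coe, Finset.mem_filter, Finset.mem_Icc] at ha
    obtain ⟨⟨h1, h2⟩, hc1, hc2⟩ := ha
    simp only [S, Q, Finset.mem_coe, Finset.mem_filter, Finset.mem_range]
    refine ⟨by omega, ?_, ?_⟩
    · rwa [show a - 1 + π.length - 1 = a + π.length - 2 by omega]
    · rwa [show a - 1 + 1 = a by omega]
  · intro b hb
    simp only [S, Q, Finset.mem_coe, Finset.mem_filter, Finset.mem_range] at hb
    obtain ⟨hbn, hq1, hq2⟩ := hb
    simp only [cPk, Finset.mem_coe, Finset.mem_filter, Finset.mem_Icc]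
    refine ⟨⟨by omega, by omega⟩, ?_, ?_⟩
    · rwa [show b + 1 + π.length - 2 = b + π.length - 1 by omega, show b + 1 - 1 = b by omega]
    · rwa [show b + 1 - 1 = b by omega]
  · intro a ha
    simp only [cPk, Finset.mem_coe, Finset.mem_filter, Finset.mem_Icc] at ha
    beta_reduce
    omega
  · intro b _
    beta_reduce
    omega


lemma pk_rotate (π : List ℕ) (hn : 2 ≤ π.length) (r : ℕ) :
    pk (π.rotate r) =
      ((S π).filter fun j =>
        j ≠ (0 + r) % π.length ∧ j ≠ (π.length - 1 + r) % π.length).card := by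
  have hn0 : 0 < π.length := by omega
  rw [pk, Pk, List.length_rotate]
  apply Finset.card_nbij' (i := fun a => (a - 1 + r) % π.length)
    (j := fun b => g π.length r b + 1)
  · intro a ha
    simp only [Finset.mem_coe, Finset.mem_filter, Finset.mem_Icc] at ha
    obtain ⟨⟨ha2, han⟩, hc1, hc2⟩ := ha
    rw [getD_rotate π r (a - 2) (by omega), getD_rotate π r (a - 1) (by omega)] at hc1
    rw [getD_rotate π r a (by omega), getD_rotate π r (a - 1) (by omega)] at hc2
    simp only [S, Q, Finset.mem_coe, Finset.mem_filter, Finset.mem_range]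
    refine ⟨⟨Nat.mod_lt _ hn0, ?_, ?_⟩, ?_, ?_⟩
    · rw [show (a - 1 + r) % π.length + π.length - 1
            = (a - 1 + r) % π.length + (π.length - 1) by omega,
        Nat.mod_add_mod,
        show a - 1 + r + (π.length - 1) = (a - 2 + r) + π.length by omega,
        Nat.add_mod_right]
      exact hc1
    · rw [Nat.mod_add_mod, show a - 1 + r + 1 = a + r by omega]
      exact hc2
    · intro h
      have := add_mod_inj hn0 r (show a - 1 < π.length by omega) (show 0 < π.length by omega) h
      omega
    · intro h
      have := add_mod_inj hn0 r (show a - 1 < π.length by omega)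
        (show π.length - 1 < π.length by omega) h
      omega
  · intro b hb
    simp only [S, Q, Finset.mem_coe, Finset.mem_filter, Finset.mem_range] at hb
    obtain ⟨⟨hbn, hq1, hq2⟩, hne1, hne2⟩ := hb
    set G := g π.length r b with hGdef
    have hG : G < π.length := g_lt hn0 r b
    have hfg : (G + r) % π.length = b := mod_g hn0 r hbn
    have hG0 : G ≠ 0 := by
      intro h
      exact hne1 (by rw [← hfg, h])
    have hGn : G ≠ π.length - 1 := by
      intro h
      exact hne2 (by rw [← hfg, h])
    simp only [Finset.mem_coe, Finset.mem_filter, Finset.mem_Icc]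
    refine ⟨⟨by omega, by omega⟩, ?_, ?_⟩
    · rw [getD_rotate π r (G + 1 - 2) (by omega), getD_rotate π r (G + 1 - 1) (by omega),
        show G + 1 - 2 = G - 1 by omega, show G + 1 - 1 = G by omega, hfg]
      have e : b + π.length - 1 = b + (π.length - 1) := by omega
      rw [e, ← hfg, Nat.mod_add_mod,
        show G + r + (π.length - 1) = (G - 1 + r) + π.length by omega,
        Nat.add_mod_right, hfg] at hq1
      exact hq1
    · rw [getD_rotate π r (G + 1) (by omega), getD_rotate π r (G + 1 - 1) (by omega),
        show G + 1 - 1 = G by omega, hfg]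
      rw [← hfg, Nat.mod_add_mod, show G + r + 1 = G + 1 + r by omega, hfg] at hq2
      exact hq2
  · intro a ha
    simp only [Finset.mem_coe, Finset.mem_filter, Finset.mem_Icc] at ha
    beta_reduce
    rw [g_mod hn0 r (show a - 1 < π.length by omega)]
    omega
  · intro b hb
    simp only [S, Q, Finset.mem_coe, Finset.mem_filter, Finset.mem_range] at hb
    beta_reduce
    rw [show g π.length r b + 1 - 1 = g π.length r b by omega, mod_g hn0 r hb.1.1]

lemma count_shift0 (π : List ℕ) (hn0 : 0 < π.length) :
    ((Finset.range π.length).filter fun r => (0 + r) % π.length ∈ S π).card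
      = (S π).card := by
  rw [Finset.filter_congr (q := fun r => r ∈ S π)
      (fun r hr => by
        rw [Finset.mem_range] at hr
        rw [Nat.zero_add, Nat.mod_eq_of_lt hr]),
    Finset.filter_mem_eq_inter]
  exact congrArg Finset.card (Finset.inter_eq_right.mpr
    (show S π ⊆ Finset.range π.length from Finset.filter_subset _ _))

lemma count_shiftback (π : List ℕ) (hn0 : 0 < π.length) :
    ((Finset.range π.length).filter fun r =>
      (π.length - 1 + r) % π.length ∈ S π).card = (S π).card := by
  apply Finset.card_nbij' (i := fun r => (π.length - 1 + r) % π.length)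
    (j := fun b => g π.length (π.length - 1) b)
  · intro a ha
    exact (Finset.mem_filter.mp ha).2
  · intro b hb
    have hbn : b < π.length := Finset.mem_range.mp (Finset.mem_filter.mp hb).1
    simp only [Finset.mem_coe, Finset.mem_filter, Finset.mem_range]
    refine ⟨g_lt hn0 _ b, ?_⟩
    rw [show π.length - 1 + g π.length (π.length - 1) b
        = g π.length (π.length - 1) b + (π.length - 1) by omega,
      mod_g hn0 _ hbn]
    exact hb
  · intro a ha
    have han : a < π.length := Finset.mem_range.mp (Finset.mem_filter.mp ha).1
    beta_reduce
    rw [show π.length - 1 + a = a + (π.length - 1) by omega, g_mod hn0 _ han]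
  · intro b hb
    have hbn : b < π.length := Finset.mem_range.mp (Finset.mem_filter.mp hb).1
    beta_reduce
    rw [show π.length - 1 + g π.length (π.length - 1) b
        = g π.length (π.length - 1) b + (π.length - 1) by omega,
      mod_g hn0 _ hbn]

lemma not_both (π : List ℕ) (hn : 2 ≤ π.length) (r : ℕ) :
    ¬((0 + r) % π.length ∈ S π ∧ (π.length - 1 + r) % π.length ∈ S π) := by
  have hn0 : 0 < π.length := by omega
  rintro ⟨h1, h2⟩
  simp only [S, Q, Finset.mem_filter, Finset.mem_range] at h1 h2
  obtain ⟨-, h1a, -⟩ := h1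
  obtain ⟨-, -, h2b⟩ := h2
  rw [show (0 + r) % π.length + π.length - 1
      = (0 + r) % π.length + (π.length - 1) by omega,
    Nat.mod_add_mod, show 0 + r + (π.length - 1) = π.length - 1 + r by omega] at h1a
  rw [Nat.mod_add_mod, show π.length - 1 + r + 1 = 0 + r + π.length by omega,
    Nat.add_mod_right] at h2b
  omega

lemma Acard (π : List ℕ) (hn : 2 ≤ π.length) (r : ℕ) :
    ((S π).filter fun j =>
      j ≠ (0 + r) % π.length ∧ j ≠ (π.length - 1 + r) % π.length).card
    = if (0 + r) % π.length ∈ S π ∨ (π.length - 1 + r) % π.length ∈ S π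
      then (S π).card - 1 else (S π).card := by
  have hn0 : 0 < π.length := by omega
  set x := (0 + r) % π.length with hx
  set y := (π.length - 1 + r) % π.length with hy
  by_cases hxS : x ∈ S π
  · have hyS : y ∉ S π := fun hyS => not_both π hn r ⟨hxS, hyS⟩
    rw [if_pos (Or.inl hxS)]
    have he : (S π).filter (fun j => j ≠ x ∧ j ≠ y) = (S π).erase x := by
      ext j
      simp only [Finset.mem_filter, Finset.mem_erase]
      constructor
      · rintro ⟨hj, h1, _⟩; exact ⟨h1, hj⟩
      · rintro ⟨h1, hj⟩; exact ⟨hj, h1, fun h => hyS (h ▸ hj)⟩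
    rw [he, Finset.card_erase_of_mem hxS]
  · by_cases hyS : y ∈ S π
    · rw [if_pos (Or.inr hyS)]
      have he : (S π).filter (fun j => j ≠ x ∧ j ≠ y) = (S π).erase y := by
        ext j
        simp only [Finset.mem_filter, Finset.mem_erase]
        constructor
        · rintro ⟨hj, _, h2⟩; exact ⟨h2, hj⟩
        · rintro ⟨h2, hj⟩; exact ⟨hj, fun h => hxS (h ▸ hj), h2⟩
      rw [he, Finset.card_erase_of_mem hyS]
    · rw [if_neg (by tauto), Finset.filter_true_of_mem]
      intro j hj
      exact ⟨fun h => hxS (h ▸ hj), fun h => hyS (h ▸ hj)⟩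

lemma event_count (π : List ℕ) (hn : 2 ≤ π.length) :
    ((Finset.range π.length).filter fun r =>
      (0 + r) % π.length ∈ S π ∨ (π.length - 1 + r) % π.length ∈ S π).card
    = 2 * (S π).card := by
  have hn0 : 0 < π.length := by omega
  rw [Finset.filter_or, Finset.card_union_of_disjoint, count_shift0 π hn0,
    count_shiftback π hn0, two_mul]
  rw [Finset.disjoint_left]
  intro r h1 h2
  exact not_both π hn r ⟨(Finset.mem_filter.mp h1).2, (Finset.mem_filter.mp h2).2⟩
lemma filter_neg_count (π : List ℕ) (hn : 2 ≤ π.length) :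
    ((Finset.range π.length).filter fun r =>
      ¬((0 + r) % π.length ∈ S π ∨ (π.length - 1 + r) % π.length ∈ S π)).card
    = π.length - 2 * (S π).card := by
  have h := Finset.card_filter_add_card_filter_not
    (s := Finset.range π.length)
    (p := fun r => (0 + r) % π.length ∈ S π ∨ (π.length - 1 + r) % π.length ∈ S π)
  rw [event_count π hn, Finset.card_range] at h
  omega

lemma cycStat_pk (π : List ℕ) (hn : 2 ≤ π.length) :
    cycStat pk π = Multiset.replicate (2 * (S π).card) ((S π).card - 1)
      + Multiset.replicate (π.length - 2 * (S π).card) (S π).card := by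
  classical
  have hmap : cycStat pk π = (Multiset.range π.length).map
      (fun r => if (0 + r) % π.length ∈ S π ∨ (π.length - 1 + r) % π.length ∈ S π
        then (S π).card - 1 else (S π).card) := by
    rw [cycStat]
    apply Multiset.map_congr rfl
    intro r _
    rw [pk_rotate π hn r, Acard π hn r]
  rw [hmap]
  ext b
  rw [Multiset.count_add, Multiset.count_replicate, Multiset.count_replicate,
    Multiset.count_map]
  rw [show Multiset.range π.length = (Finset.range π.length).val from rfl,
    ← Finset.filter_val]
  rw [show Multiset.card (Finset.filter (fun a => b =
      if (0 + a) % π.length ∈ S π ∨ (π.length - 1 + a) % π.length ∈ S π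
      then (S π).card - 1 else (S π).card) (Finset.range π.length)).val
    = (Finset.filter (fun a => b =
      if (0 + a) % π.length ∈ S π ∨ (π.length - 1 + a) % π.length ∈ S π
      then (S π).card - 1 else (S π).card) (Finset.range π.length)).card from rfl]
  by_cases hc0 : (S π).card = 0
  · rw [hc0]
    rw [Finset.filter_congr (q := fun _ => b = 0)
      (fun r _ => by constructor
                     · intro h; split_ifs at h <;> omega
                     · intro h; split_ifs <;> omega),
      Finset.filter_const, apply_ite Finset.card, Finset.card_range, Finset.card_empty]
    split_ifs <;> omega
  · have hc1 : 1 ≤ (S π).card := by omega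
    by_cases hb1 : b = (S π).card - 1
    · rw [Finset.filter_congr (q := fun r =>
        (0 + r) % π.length ∈ S π ∨ (π.length - 1 + r) % π.length ∈ S π)
        (fun r _ => by
          constructor
          · intro h
            by_contra hcon
            rw [if_neg hcon] at h
            omega
          · intro h
            rw [if_pos h, hb1]),
        event_count π hn]
      rw [if_pos hb1.symm, if_neg (by omega)]
      omega
    · by_cases hb2 : b = (S π).card
      · rw [Finset.filter_congr (q := fun r =>
          ¬((0 + r) % π.length ∈ S π ∨ (π.length - 1 + r) % π.length ∈ S π))
          (fun r _ => by
            constructor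
            · intro h hcon
              rw [if_pos hcon] at h
              omega
            · intro h
              rw [if_neg h, hb2]),
          filter_neg_count π hn]
        rw [if_neg (by omega), if_pos hb2.symm]
        omega
      · rw [Finset.filter_false_of_mem (fun r _ => by
          split_ifs <;> omega)]
        rw [if_neg (by omega), if_neg (by omega)]
        simp
lemma canon_inj {n c1 c2 : ℕ} (hn : 3 ≤ n)
    (h : Multiset.replicate (2 * c1) (c1 - 1) + Multiset.replicate (n - 2 * c1) c1
       = Multiset.replicate (2 * c2) (c2 - 1) + Multiset.replicate (n - 2 * c2) c2) :
    c1 = c2 := by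
  by_contra hne
  have h1 := congrArg (Multiset.count (c1 - 1)) h
  have h2 := congrArg (Multiset.count (c2 - 1)) h
  simp only [Multiset.count_add, Multiset.count_replicate] at h1 h2
  split_ifs at h1 h2 <;> omega

lemma cpk_small (π : List ℕ) (h : π.length ≤ 1) : cpk π = 0 := by
  rw [cpk, Finset.card_eq_zero, cPk, Finset.filter_eq_empty_iff]
  intro i hi
  rw [Finset.mem_Icc] at hi
  have h1 : i = 1 ∧ π.length = 1 := by omega
  obtain ⟨rfl, hl⟩ := h1
  rw [hl]
  norm_num

lemma pk_len1 (π : List ℕ) (h : π.length = 1) : pk π = 0 := by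
  rw [pk, Pk, h, Finset.card_eq_zero, Finset.filter_eq_empty_iff]
  intro i hi
  rw [Finset.mem_Icc] at hi
  omega

lemma cpk_len2 (π : List ℕ) (h : π.length = 2) (hd : π.Nodup) : cpk π = 1 := by
  obtain ⟨a, b, rfl⟩ := List.length_eq_two.mp h
  have hab : a ≠ b := by simpa using hd
  rw [cpk, cPk]
  have hl : [a, b].length = 2 := rfl
  rw [hl, show Finset.Icc 1 2 = {1, 2} from by decide, Finset.filter_insert,
    Finset.filter_singleton]
  norm_num
  rcases Ne.lt_or_gt hab with hlt | hlt
  · rw [if_neg (by simp [Nat.not_lt.mpr hlt.le]), if_pos (by simp [hlt])]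
    simp
  · rw [if_pos (by simp [hlt]), if_neg (by simp [Nat.not_lt.mpr hlt.le])]
    simp

end PkCpkAux

/-- The cyclic statistics `pk` and `cpk` are equivalent. -/
theorem pk_cpk_equivalent (π σ : List ℕ) (hπ : IsPerm π) (hσ : IsPerm σ)
    (hlen : π.length = σ.length) :
    cycStat pk π = cycStat pk σ ↔ cpk π = cpk σ := by
  rcases lt_or_ge π.length 2 with h2 | h2
  · have e1 : cpk π = 0 := PkCpkAux.cpk_small π (by omega)
    have e2 : cpk σ = 0 := PkCpkAux.cpk_small σ (by omega)
    have e3 : cycStat pk π = cycStat pk σ := by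
      rcases (by omega : π.length = 0 ∨ π.length = 1) with h | h
      · rw [cycStat, cycStat, h, ← hlen, h]
        simp
      · rw [cycStat, cycStat, h, ← hlen, h]
        simp only [Multiset.range_succ, Multiset.range_zero, Multiset.map_cons,
          Multiset.map_zero, List.rotate_zero]
        rw [PkCpkAux.pk_len1 π h, PkCpkAux.pk_len1 σ (hlen ▸ h)]
    simp [e1, e2, e3]
  · have Mπ := PkCpkAux.cycStat_pk π h2
    have Mσ := PkCpkAux.cycStat_pk σ (by omega)
    rw [PkCpkAux.cpk_eq, PkCpkAux.cpk_eq]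
    constructor
    · intro h
      rcases eq_or_lt_of_le h2 with h2' | h3
      · rw [← PkCpkAux.cpk_eq, ← PkCpkAux.cpk_eq,
          PkCpkAux.cpk_len2 π h2'.symm hπ.1, PkCpkAux.cpk_len2 σ (by omega) hσ.1]
      · rw [Mπ, Mσ, ← hlen] at h
        exact PkCpkAux.canon_inj (by omega) h
    · intro h
      rw [Mπ, Mσ, ← hlen, h]
end

section
/- Let π be a permutation of length n ≥ 1 and let π′ = π_n π₁ π₂ ⋯ π_{n−1} be the permutation obtained from π by moving its last letter to the front. Then cmaj π′ = maj π + cdes π. -/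
/-- Moving the last letter of a nonempty permutation `π` to the front yields a
permutation `π'` with `cmaj π' = maj π + cdes π`. -/
theorem cmaj_rotate_last (π : List ℕ) (hπ : IsPerm π) (hlen : 1 ≤ π.length) :
    cmaj (π.rotate (π.length - 1)) = maj π + cdes π := by
  set n := π.length with hn
  set π' := π.rotate (n - 1) with hπ'
  have hlen' : π'.length = n := by simp [hπ', hn]
  rcases eq_or_lt_of_le hlen with h1 | h2
  · have hn1 : n = 1 := h1.symm
    have hrt : π' = π := by rw [hπ', hn1]; simp
    have hc : cDes π = ∅ := by
      rw [cDes, ← hn, hn1]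
      ext i
      simp only [Finset.mem_filter, Finset.mem_Icc, Finset.notMem_empty, iff_false]
      rintro ⟨⟨hi1, hi2⟩, hi3⟩
      interval_cases i
      simp at hi3
    have hd : Des π = ∅ := by rw [Des, ← hn, hn1]; simp
    rw [hrt, cmaj, maj, cdes, hc, hd]; simp
  have hn2 : 2 ≤ n := h2
  have hget : ∀ j, j < n → π'.getD j 0 = π.getD ((j + (n - 1)) % n) 0 := by
    intro j hj
    have h1 : j < π'.length := by omega
    rw [List.getD_eq_getElem _ _ h1,
      List.getD_eq_getElem _ _ (by exact Nat.mod_lt _ (by omega) : (j + (n-1)) % n < π.length)]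
    simp only [hπ', List.getElem_rotate]
    rfl
  have hm : ∀ j, 1 ≤ j → j ≤ n - 1 → (j + (n - 1)) % n = j - 1 := by
    intro j hj1 hj2
    have : j + (n - 1) = n + (j - 1) := by omega
    rw [this, Nat.add_mod_left, Nat.mod_eq_of_lt (by omega)]
  have hcond : ∀ i, 1 ≤ i → i ≤ n →
      (π'.getD ((i % n + 1) % n) 0 < π'.getD (i % n) 0 ↔
        π.getD (i % n) 0 < π.getD (i - 1) 0) := by
    intro i hi1 hi2
    rcases eq_or_lt_of_le hi2 with rfl | hi
    · rw [Nat.mod_self, Nat.zero_add, Nat.mod_eq_of_lt (by omega : 1 < n)]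
      rw [hget 1 (by omega), hget 0 (by omega), hm 1 (by omega) (by omega)]
      simp
    · rw [Nat.mod_eq_of_lt hi]
      rcases eq_or_lt_of_le (by omega : i + 1 ≤ n) with hi1' | hi2'
      · rw [hi1', Nat.mod_self, hget 0 (by omega), hget i (by omega), hm i (by omega) (by omega)]
        have h0 : (0 + (n - 1)) % n = n - 1 := by
          rw [Nat.zero_add, Nat.mod_eq_of_lt (by omega)]
        rw [h0]
        have h1 : n - 1 = i := by omega
        rw [h1]
      · rw [Nat.mod_eq_of_lt hi2', hget (i+1) (by omega), hget i (by omega),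
          hm (i+1) (by omega) (by omega), hm i (by omega) (by omega)]
        simp
  have himg : ∀ i, 1 ≤ i → i ≤ n → ((i % n + 1) ∈ cDes π' ↔ i ∈ cDes π) := by
    intro i hi1 hi2
    simp only [cDes, Finset.mem_filter, Finset.mem_Icc, hlen', ← hn]
    have hb : 1 ≤ i % n + 1 ∧ i % n + 1 ≤ n := by
      have := Nat.mod_lt i (by omega : 0 < n)
      omega
    have h3 : i % n + 1 - 1 = i % n := by omega
    rw [h3]
    constructor
    · rintro ⟨_, hc⟩
      exact ⟨⟨hi1, hi2⟩, (hcond i hi1 hi2).mp hc⟩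
    · rintro ⟨_, hc⟩
      exact ⟨hb, (hcond i hi1 hi2).mpr hc⟩
  have hmemP : ∀ i ∈ cDes π, 1 ≤ i ∧ i ≤ n := by
    intro i hi
    simp only [cDes, Finset.mem_filter, Finset.mem_Icc, ← hn] at hi
    exact hi.1
  have hmemP' : ∀ j ∈ cDes π', 1 ≤ j ∧ j ≤ n := by
    intro j hj
    simp only [cDes, Finset.mem_filter, Finset.mem_Icc, hlen'] at hj
    exact hj.1
  -- key rewriting fact: for j ∈ [1,n], (g j) % n + 1 = j where g j = if j = 1 then n else j-1
  have hgj : ∀ j, 1 ≤ j → j ≤ n → ((if j = 1 then n else j - 1) % n + 1 = j) := by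
    intro j hj1 hj2
    by_cases h : j = 1
    · simp [h, Nat.mod_self]
    · rw [if_neg h, Nat.mod_eq_of_lt (by omega)]
      omega
  have hsum : cmaj π' = ∑ i ∈ cDes π, (i % n + 1) := by
    rw [cmaj]
    apply Finset.sum_nbij' (fun j => if j = 1 then n else j - 1) (fun i => i % n + 1)
    · intro j hj
      obtain ⟨hj1, hj2⟩ := hmemP' j hj
      set g := if j = 1 then n else j - 1 with hg
      have hgb : 1 ≤ g ∧ g ≤ n := by
        rw [hg]; split <;> omega
      have := himg g hgb.1 hgb.2
      rw [show g % n + 1 = j from hgj j hj1 hj2] at this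
      exact this.mp hj
    · intro i hi
      obtain ⟨hi1, hi2⟩ := hmemP i hi
      exact (himg i hi1 hi2).mpr hi
    · intro j hj
      obtain ⟨hj1, hj2⟩ := hmemP' j hj
      exact hgj j hj1 hj2
    · intro i hi
      obtain ⟨hi1, hi2⟩ := hmemP i hi
      by_cases h : i % n + 1 = 1
      · have : i % n = 0 := by omega
        have hi' : i = n := by
          rcases eq_or_lt_of_le hi2 with h' | h'
          · exact h'
          · rw [Nat.mod_eq_of_lt h'] at this; omega
        simp [h, hi']
      · rw [if_neg h]
        have hlt : i < n ∨ i = n := by omega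
        rcases hlt with hlt | rfl
        · rw [Nat.mod_eq_of_lt hlt]; omega
        · rw [Nat.mod_self] at h; simp at h
    · intro j hj
      obtain ⟨hj1, hj2⟩ := hmemP' j hj
      exact (hgj j hj1 hj2).symm
  rw [hsum]
  -- now split the sum
  have hDes : Des π = (cDes π).erase n := by
    ext i
    simp only [Des, cDes, Finset.mem_erase, Finset.mem_filter, Finset.mem_Icc, ← hn]
    constructor
    · rintro ⟨⟨hi1, hi2⟩, hc⟩
      refine ⟨by omega, ⟨⟨by omega, by omega⟩, ?_⟩⟩
      rwa [Nat.mod_eq_of_lt (by omega)]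
    · rintro ⟨hne, ⟨⟨hi1, hi2⟩, hc⟩⟩
      rw [Nat.mod_eq_of_lt (by omega)] at hc
      exact ⟨⟨by omega, by omega⟩, hc⟩
  have hsplit : ∑ i ∈ cDes π, (i % n + 1) = (∑ i ∈ cDes π, i % n) + cdes π := by
    rw [Finset.sum_add_distrib, Finset.sum_const, smul_eq_mul, mul_one, cdes]
  rw [hsplit]
  congr 1
  rw [maj, hDes]
  rw [← Finset.sum_erase (cDes π) (f := fun i => i % n) (by simp [Nat.mod_self] : n % n = 0)]
  apply Finset.sum_congr rfl
  intro i hi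
  rw [Finset.mem_erase] at hi
  obtain ⟨hi1, hi2⟩ := hmemP i hi.2
  rw [Nat.mod_eq_of_lt (by omega)]
end

section
/- The cyclic statistics cDes and ocmaj are equivalent: for all permutations π and σ of the same length n ≥ 1, defining π^{(1)} = π and π^{(i+1)} to be the permutation obtained from π^{(i)} by moving its last letter to the front (and similarly σ^{(1)} = σ, etc.), the multiset {{cDes π̄ : π̄ ∈ [π]}} equals the multiset {{cDes σ̄ : σ̄ ∈ [σ]}} if and only if the list (cmaj π^{(1)}, cmaj π^{(2)}, …, cmaj π^{(n)}) is a cyclic rotation of the list (cmaj σ^{(1)}, cmaj σ^{(2)}, …, cmaj σ^{(n)}). -/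
/-- Move the last letter of a list to the front. -/
def rotLast (l : List ℕ) : List ℕ := l.rotate (l.length - 1)

lemma mod2 {n m : ℕ} (hn : 0 < n) (h : m < 2 * n) : m % n = if m < n then m else m - n := by
  split_ifs with h1
  · exact Nat.mod_eq_of_lt h1
  · rw [Nat.mod_eq_sub_mod (le_of_not_gt h1), Nat.mod_eq_of_lt (by omega)]

lemma modred {n m r : ℕ} (hn : 0 < n) (h : m < 2 * n) (h1 : m < n → r = m)
    (h2 : n ≤ m → r = m - n) : m % n = r := by
  rw [mod2 hn h]; split_ifs with h'
  exacts [(h1 h').symm, (h2 (by omega)).symm]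

lemma aux_getD_rotate (l : List ℕ) (j m : ℕ) (hm : m < l.length) :
    (l.rotate j).getD m 0 = l.getD ((m + j) % l.length) 0 := by
  rw [List.getD_eq_getElem _ _ (by simpa using hm),
    List.getD_eq_getElem _ _ (Nat.mod_lt _ (by omega)), List.getElem_rotate]

def shf (n : ℕ) (S : Finset ℕ) : Finset ℕ := S.image fun k => k % n + 1

lemma shf_subset_Icc {n : ℕ} (hn : 0 < n) (S : Finset ℕ) : shf n S ⊆ Finset.Icc 1 n := by
  intro x hx
  simp only [shf, Finset.mem_image] at hx
  obtain ⟨k, -, rfl⟩ := hx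
  have := Nat.mod_lt k hn
  simp only [Finset.mem_Icc]; omega

lemma cDes_subset_Icc (π : List ℕ) : cDes π ⊆ Finset.Icc 1 π.length :=
  Finset.filter_subset _ _

lemma cDes_rotLast (π : List ℕ) : cDes (rotLast π) = shf π.length (cDes π) := by
  rcases Nat.eq_zero_or_pos π.length with h0 | hn
  · rw [List.length_eq_zero_iff] at h0; subst h0; rfl
  set n := π.length with hn'
  have hlen : (rotLast π).length = n := by simp [rotLast, hn']
  ext i
  simp only [shf, Finset.mem_image, cDes, Finset.mem_filter, Finset.mem_Icc, hlen, ← hn']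
  constructor
  · rintro ⟨⟨h1, h2⟩, hc⟩
    rw [show rotLast π = π.rotate (n - 1) from rfl,
      aux_getD_rotate _ _ _ (by rw [← hn']; exact Nat.mod_lt _ hn),
      aux_getD_rotate _ _ _ (by omega), ← hn'] at hc
    by_cases hi1 : i = 1
    · subst hi1
      refine ⟨n, ⟨⟨hn, le_refl n⟩, ?_⟩, by simp [Nat.mod_self]⟩
      rcases Nat.lt_or_ge 1 n with h | h
      · rw [show 1 % n = 1 from Nat.mod_eq_of_lt h,
          show (1 + (n-1)) % n = 0 from modred hn (by omega) (by omega) (by omega),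
          show (1 - 1 + (n-1)) % n = n - 1 from
            modred hn (by omega) (by omega) (by omega)] at hc
        rwa [Nat.mod_self]
      · have hn1 : n = 1 := by omega
        rw [hn1] at hc; simp at hc
    · refine ⟨i - 1, ⟨⟨by omega, by omega⟩, ?_⟩, ?_⟩
      · rw [show (i-1) % n = i - 1 from Nat.mod_eq_of_lt (by omega)]
        rcases Nat.lt_or_ge i n with h | h
        · rwa [show i % n = i from Nat.mod_eq_of_lt h,
            show (i + (n-1)) % n = i - 1 from modred hn (by omega) (by omega) (by omega),
            show (i - 1 + (n-1)) % n = i - 2 from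
              modred hn (by omega) (by omega) (by omega)] at hc
        · have hin : i = n := by omega
          subst hin
          rwa [Nat.mod_self,
            show (0 + (n-1)) % n = n - 1 from modred hn (by omega) (by omega) (by omega),
            show (n - 1 + (n-1)) % n = n - 2 from
              modred hn (by omega) (by omega) (by omega)] at hc
      · rw [Nat.mod_eq_of_lt (by omega)]; omega
  · rintro ⟨k, ⟨⟨hk1, hk2⟩, hkc⟩, rfl⟩
    refine ⟨⟨by omega, by have := Nat.mod_lt k hn; omega⟩, ?_⟩
    rw [show rotLast π = π.rotate (n - 1) from rfl,
      aux_getD_rotate _ _ _ (by rw [← hn']; exact Nat.mod_lt _ hn),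
      aux_getD_rotate _ _ _ (by rw [← hn']; have := Nat.mod_lt k hn; omega), ← hn']
    rcases Nat.lt_or_ge k n with h | h
    · rw [show k % n = k from Nat.mod_eq_of_lt h] at hkc ⊢
      rcases Nat.lt_or_ge (k+1) n with h2 | h2
      · rwa [show (k + 1) % n = k + 1 from Nat.mod_eq_of_lt h2,
          show (k + 1 + (n-1)) % n = k from modred hn (by omega) (by omega) (by omega),
          show (k + 1 - 1 + (n-1)) % n = k - 1 from
            modred hn (by omega) (by omega) (by omega)]
      · rwa [show (k + 1) % n = 0 from modred hn (by omega) (by omega) (by omega),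
          show (0 + (n-1)) % n = k from modred hn (by omega) (by omega) (by omega),
          show (k + 1 - 1 + (n-1)) % n = k - 1 from
            modred hn (by omega) (by omega) (by omega)]
    · have hkn : k = n := by omega
      subst hkn
      rw [Nat.mod_self] at hkc ⊢
      rcases Nat.lt_or_ge 1 n with h1n | h1n
      · rwa [show (0 + 1) % n = 0 + 1 from Nat.mod_eq_of_lt h1n,
          show (0 + 1 + (n-1)) % n = 0 from modred hn (by omega) (by omega) (by omega),
          show (0 + 1 - 1 + (n-1)) % n = n - 1 from
            modred hn (by omega) (by omega) (by omega)]
      · have hne : n = 1 := by omega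
        rw [hne] at hkc; simp at hkc

lemma length_rotLast_iter (π : List ℕ) (i : ℕ) : (rotLast^[i] π).length = π.length := by
  induction i with
  | zero => rfl
  | succ i ih => rw [Function.iterate_succ_apply', rotLast, List.length_rotate, ih]

lemma cDes_rotLast_iter (π : List ℕ) (i : ℕ) :
    cDes (rotLast^[i] π) = (shf π.length)^[i] (cDes π) := by
  induction i with
  | zero => rfl
  | succ i ih =>
    rw [Function.iterate_succ_apply', Function.iterate_succ_apply', cDes_rotLast,
      length_rotLast_iter, ih]

lemma shf_iter_subset {n : ℕ} (hn : 0 < n) {S : Finset ℕ} (hS : S ⊆ Finset.Icc 1 n) (i : ℕ) :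
    (shf n)^[i] S ⊆ Finset.Icc 1 n := by
  cases i with
  | zero => exact hS
  | succ i => rw [Function.iterate_succ_apply']; exact shf_subset_Icc hn _

lemma shf_iter_eq {n : ℕ} (hn : 0 < n) {S : Finset ℕ} (hS : S ⊆ Finset.Icc 1 n) (i : ℕ) :
    (shf n)^[i] S = S.image fun k => (k - 1 + i) % n + 1 := by
  induction i with
  | zero =>
    rw [Function.iterate_zero_apply]
    nth_rewrite 1 [show S = S.image id from (Finset.image_id).symm]
    apply Finset.image_congr
    intro k hk
    have hk' := Finset.mem_Icc.1 (hS hk)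
    simp only [id]
    rw [show (k - 1 + 0) % n = k - 1 from Nat.mod_eq_of_lt (by omega)]
    omega
  | succ i ih =>
    rw [Function.iterate_succ_apply', ih, shf, Finset.image_image]
    apply Finset.image_congr
    intro k hk
    simp only [Function.comp]
    rw [Nat.mod_add_mod, show k - 1 + i + 1 = k - 1 + (i+1) by omega]

lemma shf_iter_injOn {n : ℕ} (hn : 0 < n) {S : Finset ℕ} (hS : S ⊆ Finset.Icc 1 n) (i : ℕ) :
    ∀ x ∈ S, ∀ y ∈ S, (fun k => (k - 1 + i) % n + 1) x = (fun k => (k - 1 + i) % n + 1) y →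
      x = y := by
  intro x hx y hy hxy
  have hx' := Finset.mem_Icc.1 (hS hx)
  have hy' := Finset.mem_Icc.1 (hS hy)
  simp only at hxy
  have h2 : (x - 1 + i) % n = (y - 1 + i) % n := by omega
  have h3 : x - 1 ≡ y - 1 [MOD n] := Nat.ModEq.add_right_cancel' i h2
  have h4 : (x-1) % n = (y-1) % n := h3
  rw [Nat.mod_eq_of_lt (by omega), Nat.mod_eq_of_lt (by omega)] at h4
  omega

lemma shf_iter_card {n : ℕ} (hn : 0 < n) {S : Finset ℕ} (hS : S ⊆ Finset.Icc 1 n) (i : ℕ) :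
    ((shf n)^[i] S).card = S.card := by
  rw [shf_iter_eq hn hS i]
  exact Finset.card_image_of_injOn (shf_iter_injOn hn hS i)

lemma shf_iter_mod {n : ℕ} (hn : 0 < n) {S : Finset ℕ} (hS : S ⊆ Finset.Icc 1 n) (i : ℕ) :
    (shf n)^[i] S = (shf n)^[i % n] S := by
  rw [shf_iter_eq hn hS i, shf_iter_eq hn hS (i % n)]
  apply Finset.image_congr
  intro k _
  simp only
  rw [← Nat.add_mod_mod (k-1) i n]

lemma mem_shf_iter_n {n : ℕ} (hn : 0 < n) {S : Finset ℕ} (hS : S ⊆ Finset.Icc 1 n) {k : ℕ}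
    (hk1 : 1 ≤ k) (hk2 : k ≤ n) : k ∈ S ↔ n ∈ (shf n)^[n - k] S := by
  rw [shf_iter_eq hn hS, Finset.mem_image]
  constructor
  · intro hk
    exact ⟨k, hk, by rw [show (k - 1 + (n - k)) % n = n - 1 from
      modred hn (by omega) (by omega) (by omega)]; omega⟩
  · rintro ⟨m, hm, hmn⟩
    have hm' := Finset.mem_Icc.1 (hS hm)
    rw [show (m - 1 + (n - k)) % n = if m - 1 + (n-k) < n then m - 1 + (n-k)
        else m - 1 + (n-k) - n from mod2 hn (by omega)] at hmn
    split_ifs at hmn <;> [skip; omega]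
    have : m = k := by omega
    rwa [this] at hm

def Lw (n : ℕ) (S : Finset ℕ) : List ℕ := (List.range n).map fun i => ∑ k ∈ (shf n)^[i] S, k

lemma sum_mod_shift (n m : ℕ) :
    ∑ i ∈ Finset.range n, (m + i) % n = ∑ i ∈ Finset.range n, i := by
  induction m with
  | zero =>
    apply Finset.sum_congr rfl
    intro i hi
    rw [Finset.mem_range] at hi
    rw [Nat.zero_add, Nat.mod_eq_of_lt hi]
  | succ m ih =>
    have key : ∑ i ∈ Finset.range n, (m + 1 + i) % n = ∑ i ∈ Finset.range n, (m + i) % n := by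
      have h1 := Finset.sum_range_succ' (fun i => (m + i) % n) n
      have h2 := Finset.sum_range_succ (fun i => (m + i) % n) n
      have h3 : (m + n) % n = (m + 0) % n := by rw [Nat.add_mod_right, Nat.add_zero]
      have h4 : ∑ i ∈ Finset.range n, (m + 1 + i) % n
          = ∑ i ∈ Finset.range n, (m + (i + 1)) % n := by
        apply Finset.sum_congr rfl; intro i _; congr 1; omega
      omega
    rw [key, ih]

lemma sum_Lw {n : ℕ} (hn : 0 < n) {S : Finset ℕ} (hS : S ⊆ Finset.Icc 1 n) :
    ∑ i ∈ Finset.range n, (∑ k ∈ (shf n)^[i] S, k)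
      = S.card * ∑ i ∈ Finset.range n, (i + 1) := by
  have step : ∀ i, (∑ k ∈ (shf n)^[i] S, k) = ∑ k ∈ S, ((k - 1 + i) % n + 1) := by
    intro i
    rw [shf_iter_eq hn hS i, Finset.sum_image (shf_iter_injOn hn hS i)]
  calc ∑ i ∈ Finset.range n, (∑ k ∈ (shf n)^[i] S, k)
      = ∑ i ∈ Finset.range n, ∑ k ∈ S, ((k - 1 + i) % n + 1) := by
        apply Finset.sum_congr rfl; intro i _; exact step i
    _ = ∑ k ∈ S, ∑ i ∈ Finset.range n, ((k - 1 + i) % n + 1) := Finset.sum_comm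
    _ = ∑ k ∈ S, ∑ i ∈ Finset.range n, (i + 1) := by
        apply Finset.sum_congr rfl
        intro k _
        rw [Finset.sum_add_distrib, Finset.sum_add_distrib, sum_mod_shift]
    _ = S.card * ∑ i ∈ Finset.range n, (i + 1) := by
        rw [Finset.sum_const, smul_eq_mul]

lemma sum_shf {n : ℕ} (hn : 0 < n) {T : Finset ℕ} (hT : T ⊆ Finset.Icc 1 n) :
    (∑ k ∈ shf n T, k) + (if n ∈ T then n else 0) = (∑ k ∈ T, k) + T.card := by
  have hinj : ∀ x ∈ T, ∀ y ∈ T, x % n + 1 = y % n + 1 → x = y := by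
    intro x hx y hy hxy
    have hx' := Finset.mem_Icc.1 (hT hx)
    have hy' := Finset.mem_Icc.1 (hT hy)
    rw [mod2 hn (by omega), mod2 hn (by omega)] at hxy
    split_ifs at hxy <;> omega
  rw [shf, Finset.sum_image hinj,
    show (if n ∈ T then n else 0) = ∑ k ∈ T, (if k = n then n else 0) from
      (Finset.sum_ite_eq' T n (fun _ => n)).symm,
    ← Finset.sum_add_distrib,
    show T.card = ∑ _k ∈ T, 1 from by rw [Finset.sum_const, smul_eq_mul, mul_one],
    ← Finset.sum_add_distrib]
  apply Finset.sum_congr rfl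
  intro k hk
  have hk' := Finset.mem_Icc.1 (hT hk)
  rw [mod2 hn (by omega)]
  split_ifs <;> omega

lemma Lw_getD {n : ℕ} (S : Finset ℕ) {i : ℕ} (hi : i < n) :
    (Lw n S).getD i 0 = ∑ k ∈ (shf n)^[i] S, k := by
  rw [Lw, List.getD_eq_getElem _ _ (by simpa using hi), List.getElem_map, List.getElem_range]

lemma Lw_inj {n : ℕ} (hn : 0 < n) {S T : Finset ℕ} (hS : S ⊆ Finset.Icc 1 n)
    (hT : T ⊆ Finset.Icc 1 n) (h : Lw n S = Lw n T) : S = T := by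
  have hpt : ∀ i < n, (∑ k ∈ (shf n)^[i] S, k) = ∑ k ∈ (shf n)^[i] T, k := by
    intro i hi
    rw [← Lw_getD S hi, ← Lw_getD T hi, h]
  have hcard : S.card = T.card := by
    have h1 := sum_Lw hn hS
    have h2 := sum_Lw hn hT
    rw [Finset.sum_congr rfl (fun i hi => hpt i (Finset.mem_range.1 hi))] at h1
    have hC : 0 < ∑ i ∈ Finset.range n, (i + 1) :=
      Finset.sum_pos (fun i _ => by omega) (Finset.nonempty_range_iff.2 (by omega))
    exact Nat.eq_of_mul_eq_mul_right hC (h1 ▸ h2 ▸ rfl)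
  have hchi : ∀ i < n, (n ∈ (shf n)^[i] S ↔ n ∈ (shf n)^[i] T) := by
    intro i hi
    have e1 := sum_shf hn (shf_iter_subset hn hS i)
    have e2 := sum_shf hn (shf_iter_subset hn hT i)
    rw [← Function.iterate_succ_apply' (shf n) i S,
      shf_iter_mod hn hS (i+1), hpt ((i+1) % n) (Nat.mod_lt _ hn),
      ← shf_iter_mod hn hT (i+1), Function.iterate_succ_apply' (shf n) i T,
      hpt i hi, shf_iter_card hn hS i, hcard, ← shf_iter_card hn hT i] at e1
    constructor <;> intro hmem <;> by_contra hmem'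
    · rw [if_pos hmem] at e1
      rw [if_neg hmem'] at e2
      exact absurd (Nat.add_left_cancel (e1.trans e2.symm)) (by omega)
    · rw [if_neg hmem'] at e1
      rw [if_pos hmem] at e2
      exact absurd (Nat.add_left_cancel (e2.trans e1.symm)) (by omega)
  ext k
  by_cases hk : k ∈ Finset.Icc 1 n
  · have hk' := Finset.mem_Icc.1 hk
    rw [mem_shf_iter_n hn hS hk'.1 hk'.2, mem_shf_iter_n hn hT hk'.1 hk'.2]
    exact hchi (n - k) (by omega)
  · constructor <;> intro hm
    · exact absurd (hS hm) hk
    · exact absurd (hT hm) hk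

lemma map_range_perm {n : ℕ} (f : ℕ → ℕ) (hf : ∀ i < n, f i < n)
    (hinj : ∀ i < n, ∀ j < n, f i = f j → i = j)
    {A : Type*} (g : ℕ → A) :
    (Multiset.range n).map (fun i => g (f i)) = (Multiset.range n).map g := by
  have hinj' : Set.InjOn f ↑(Finset.range n) := by
    intro x hx y hy
    simp only [Finset.coe_range, Set.mem_Iio] at hx hy
    exact hinj x hx y hy
  have himg : (Finset.range n).image f = Finset.range n := by
    apply Finset.eq_of_subset_of_card_le
    · intro r hr
      simp only [Finset.mem_image, Finset.mem_range] at hr ⊢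
      obtain ⟨i, hi, rfl⟩ := hr
      exact hf i hi
    · rw [Finset.card_image_of_injOn hinj', Finset.card_range]
  have hm : (Multiset.range n).map f = Multiset.range n := by
    have := Finset.image_val_of_injOn hinj'
    rw [himg] at this
    exact this.symm
  calc (Multiset.range n).map (fun i => g (f i))
      = ((Multiset.range n).map f).map g := by rw [Multiset.map_map]; rfl
    _ = (Multiset.range n).map g := by rw [hm]

lemma rotLast_iter_rotate (π : List ℕ) (j : ℕ) :
    rotLast^[j] π = π.rotate (j * (π.length - 1)) := by
  induction j with
  | zero => simp
  | succ j ih =>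
    rw [Function.iterate_succ_apply', ih, rotLast, List.length_rotate, List.rotate_rotate]
    congr 1
    ring

lemma cDes_rotate (π : List ℕ) {n i : ℕ} (hπn : π.length = n) (hn : 0 < n) (hi : i < n) :
    cDes (π.rotate i) = (shf n)^[(n - i) % n] (cDes π) := by
  have key : π.rotate i = rotLast^[n - i] π := by
    rw [rotLast_iter_rotate, hπn]
    have harith : (n - i) * (n - 1) = i + (n - 1 - i) * n := by
      zify [show i ≤ n by omega, show 1 ≤ n by omega, show i ≤ n - 1 by omega]
      ring
    rw [harith, ← List.rotate_mod π (i + (n - 1 - i) * n), ← hπn] at *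
    rw [hπn, Nat.add_mul_mod_self_right, List.rotate_mod]
  rw [key, cDes_rotLast_iter, hπn, shf_iter_mod hn (hπn ▸ cDes_subset_Icc π)]

lemma cycStat_cDes_eq {n : ℕ} (hn : 0 < n) (π : List ℕ) (hπn : π.length = n) :
    cycStat cDes π = (Multiset.range n).map (fun j => (shf n)^[j] (cDes π)) := by
  have hD : cDes π ⊆ Finset.Icc 1 n := hπn ▸ cDes_subset_Icc π
  rw [cycStat, hπn]
  rw [Multiset.map_congr rfl (fun i hi => cDes_rotate π hπn hn (Multiset.mem_range.1 hi))]
  exact map_range_perm (fun i => (n - i) % n) (fun i _ => Nat.mod_lt _ hn)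
    (fun i hi j hj hij => by
      rw [mod2 hn (by omega), mod2 hn (by omega)] at hij
      split_ifs at hij <;> omega) (fun m => (shf n)^[m] (cDes π))

lemma orbit_eq_iff {n : ℕ} (hn : 0 < n) {D E : Finset ℕ} (hD : D ⊆ Finset.Icc 1 n)
    (hE : E ⊆ Finset.Icc 1 n) :
    (Multiset.range n).map (fun j => (shf n)^[j] D)
      = (Multiset.range n).map (fun j => (shf n)^[j] E) ↔ ∃ j, (shf n)^[j] D = E := by
  constructor
  · intro h
    have hmem : E ∈ (Multiset.range n).map (fun j => (shf n)^[j] E) :=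
      Multiset.mem_map.2 ⟨0, Multiset.mem_range.2 hn, rfl⟩
    rw [← h] at hmem
    obtain ⟨j, _, hj⟩ := Multiset.mem_map.1 hmem
    exact ⟨j, hj⟩
  · rintro ⟨j, rfl⟩
    symm
    calc (Multiset.range n).map (fun i => (shf n)^[i] ((shf n)^[j] D))
        = (Multiset.range n).map (fun i => (shf n)^[(i + j) % n] D) := by
          apply Multiset.map_congr rfl
          intro i _
          rw [← Function.iterate_add_apply, shf_iter_mod hn hD]
      _ = (Multiset.range n).map (fun i => (shf n)^[i] D) := by
          exact map_range_perm (fun i => (i + j) % n) (fun i _ => Nat.mod_lt _ hn)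
            (fun i hi i' hi' hii => by
              have h3 : i ≡ i' [MOD n] := Nat.ModEq.add_right_cancel' j hii
              have h4 : i % n = i' % n := h3
              rwa [Nat.mod_eq_of_lt hi, Nat.mod_eq_of_lt hi'] at h4)
            (fun m => (shf n)^[m] D)

lemma Lw_rotate {n : ℕ} (hn : 0 < n) {D : Finset ℕ} (hD : D ⊆ Finset.Icc 1 n) (j : ℕ) :
    (Lw n D).rotate j = Lw n ((shf n)^[j] D) := by
  have hlen : (Lw n D).length = n := by simp [Lw]
  apply List.ext_getElem
  · simp [Lw]
  · intro i h1 h2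
    have hi : i < n := by simpa [Lw] using h2
    have e := aux_getD_rotate (Lw n D) j i (by rw [hlen]; exact hi)
    rw [hlen] at e
    rw [List.getD_eq_getElem _ _ h1] at e
    rw [e, Lw_getD D (Nat.mod_lt (i + j) hn), ← shf_iter_mod hn hD (i + j),
      Function.iterate_add_apply, ← Lw_getD ((shf n)^[j] D) hi,
      List.getD_eq_getElem _ _ h2]


/-- The cyclic statistics `cDes` and `ocmaj` are equivalent: for permutations `π`, `σ`
of the same length `n ≥ 1`, the multisets of cyclic descent sets of their rotations agree
iff the sequences `(cmaj π⁽¹⁾, …, cmaj π⁽ⁿ⁾)` and `(cmaj σ⁽¹⁾, …, cmaj σ⁽ⁿ⁾)` are cyclic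
rotations of one another, where `π⁽¹⁾ = π` and `π⁽ⁱ⁺¹⁾` is obtained from `π⁽ⁱ⁾` by
moving its last letter to the front. -/
theorem cDes_ocmaj_equivalent (n : ℕ) (hn : 1 ≤ n) (π σ : List ℕ)
    (hπ : IsPerm π) (hσ : IsPerm σ) (hπn : π.length = n) (hσn : σ.length = n) :
    cycStat cDes π = cycStat cDes σ ↔
      ((List.range n).map fun i => cmaj (rotLast^[i] π)).IsRotated
        ((List.range n).map fun i => cmaj (rotLast^[i] σ)) := by
  have hn0 : 0 < n := hn
  have hD : cDes π ⊆ Finset.Icc 1 n := hπn ▸ cDes_subset_Icc π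
  have hE : cDes σ ⊆ Finset.Icc 1 n := hσn ▸ cDes_subset_Icc σ
  have hLπ : ((List.range n).map fun i => cmaj (rotLast^[i] π)) = Lw n (cDes π) := by
    rw [Lw]
    apply List.map_congr_left
    intro i _
    simp only [cmaj]
    rw [cDes_rotLast_iter, hπn]
  have hLσ : ((List.range n).map fun i => cmaj (rotLast^[i] σ)) = Lw n (cDes σ) := by
    rw [Lw]
    apply List.map_congr_left
    intro i _
    simp only [cmaj]
    rw [cDes_rotLast_iter, hσn]
  rw [cycStat_cDes_eq hn0 π hπn, cycStat_cDes_eq hn0 σ hσn, orbit_eq_iff hn0 hD hE, hLπ, hLσ]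
  constructor
  · rintro ⟨j, hj⟩
    exact ⟨j, by rw [Lw_rotate hn0 hD, hj]⟩
  · rintro ⟨j, hj⟩
    refine ⟨j, ?_⟩
    apply Lw_inj hn0 (shf_iter_subset hn0 hD j) hE
    rw [← Lw_rotate hn0 hD, hj]
end
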